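/- Let A be a strand symmetric (SSM) matrix, i.e. a 4×4 real matrix with rows (a,b,c,d), (e,f,g,h), (h,g,f,e), (d,c,b,a) where a+b+c+d=1 and e+f+g+h=1. Setting λ = a+d, μ = f+g, α = f-g, α' = h-e, β = a-d, β' = c-b, we have det(A) = (λ+μ-1)·(αβ - α'β'). -/

import Mathlib

theorem stmt_13 (a b c d e f g h : ℝ)
    (hsum1 : a + b + c + d = 1) (hsum2 : e + f + g + h = 1)
    (A : Matrix (Fin 4) (Fin 4) ℝ)
    (hA : A = !![a, b, c, d; e, f, g, h; h, g, f, e; d, c, b, a]) :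
    A.det = ((a + d) + (f + g) - 1) * ((f - g) * (a - d) - (h - e) * (c - b)) := by
  subst hA
  simp [Matrix.det_succ_row_zero, Fin.sum_univ_succ, Fin.succAbove, Fin.castSucc, Fin.castAdd, Fin.castLE]
  linear_combination (-(1 - f - g) * ((a - d) * (f - g) - (b - c) * (e - h))) * hsum1 + (-(b + c) * ((a - d) * (f - g) - (b - c) * (e - h))) * hsum2
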